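/- Let V be a finite-dimensional complex vector space equipped with two norms N₀ and N₁, viewed as the compatible couple X₀ = X₁ = V inside U = V, and let K(x,t) denote the associated K-functional. Then for every x ∈ V one has lim_{t→∞} K(x,t) = N₀(x) and lim_{t→0⁺} K(x,t)/t = N₁(x); that is, every finite-dimensional compatible couple is normal at every point. -/
import Mathlib


open Set Filter Topology

noncomputable section

/-- `N` is a norm on the complex vector space `V`. -/
structure IsNorm (V : Type*) [AddCommGroup V] [Module ℂ V] (N : V → ℝ) : Prop where
  eq_zero_iff : ∀ x : V, N x = 0 ↔ x = 0
  smul : ∀ (a : ℂ) (x : V), N (a • x) = ‖a‖ * N x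
  add_le : ∀ x y : V, N (x + y) ≤ N x + N y

/-- The K-functional of the couple `X₀ = X₁ = V` with norms `N₀, N₁`:
`K(x,t) = inf { N₀ x₀ + t·N₁ x₁ : x₀ + x₁ = x }`. -/
def Kfunctional {V : Type*} [AddCommGroup V] [Module ℂ V]
    (N₀ N₁ : V → ℝ) (x : V) (t : ℝ) : ℝ :=
  sInf {v : ℝ | ∃ x₀ x₁ : V, x₀ + x₁ = x ∧ v = N₀ x₀ + t * N₁ x₁}

namespace IsNormAux

variable {V : Type*} [AddCommGroup V] [Module ℂ V]

lemma map_zero {N : V → ℝ} (h : IsNorm V N) : N 0 = 0 := (h.eq_zero_iff 0).mpr rfl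

lemma map_neg {N : V → ℝ} (h : IsNorm V N) (x : V) : N (-x) = N x := by
  have := h.smul (-1) x
  simpa using this

lemma nonneg {N : V → ℝ} (h : IsNorm V N) (x : V) : 0 ≤ N x := by
  have h1 := h.add_le x (-x)
  have h2 := map_neg h x
  have h3 : N (x + -x) = 0 := by simpa using map_zero h
  linarith

/-- Type synonym carrying the norm `N`. -/
def Clone (V : Type*) (_N : V → ℝ) : Type _ := V

instance (N : V → ℝ) : AddCommGroup (Clone V N) := inferInstanceAs (AddCommGroup V)
instance (N : V → ℝ) : Module ℂ (Clone V N) := inferInstanceAs (Module ℂ V)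
instance [FiniteDimensional ℂ V] (N : V → ℝ) : FiniteDimensional ℂ (Clone V N) :=
  inferInstanceAs (FiniteDimensional ℂ V)

def agn {N : V → ℝ} (h : IsNorm V N) : AddGroupNorm (Clone V N) where
  toFun := N
  map_zero' := map_zero h
  add_le' := h.add_le
  neg' := map_neg h
  eq_zero_of_map_eq_zero' := fun x hx => (h.eq_zero_iff x).mp hx

/-- Any two norms on a finite-dimensional complex space are comparable. -/
lemma exists_bound [FiniteDimensional ℂ V] {N₀ N₁ : V → ℝ}
    (h₀ : IsNorm V N₀) (h₁ : IsNorm V N₁) :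
    ∃ C : ℝ, 0 < C ∧ ∀ x : V, N₀ x ≤ C * N₁ x := by
  letI i0 : NormedAddCommGroup (Clone V N₀) := (agn h₀).toNormedAddCommGroup
  letI i1 : NormedAddCommGroup (Clone V N₁) := (agn h₁).toNormedAddCommGroup
  letI : NormedSpace ℂ (Clone V N₀) :=
    ⟨fun a x => le_of_eq (h₀.smul a x)⟩
  letI : NormedSpace ℂ (Clone V N₁) :=
    ⟨fun a x => le_of_eq (h₁.smul a x)⟩
  let f : Clone V N₁ →L[ℂ] Clone V N₀ :=
    LinearMap.toContinuousLinearMap (LinearMap.id : Clone V N₁ →ₗ[ℂ] Clone V N₀)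
  refine ⟨‖f‖ + 1, by positivity, fun x => ?_⟩
  have h1 : N₀ x ≤ ‖f‖ * N₁ x := f.le_opNorm x
  nlinarith [nonneg h₁ x]

end IsNormAux

open IsNormAux

/-- Every finite-dimensional compatible couple is normal at every point:
for a finite-dimensional complex vector space `V` with two norms `N₀, N₁`, viewed as the
compatible couple `X₀ = X₁ = V`, one has `lim_{t→∞} K(x,t) = N₀ x` and
`lim_{t→0⁺} K(x,t)/t = N₁ x` for every `x ∈ V`. -/
theorem finiteDimensional_couple_normal
    {V : Type*} [AddCommGroup V] [Module ℂ V] [FiniteDimensional ℂ V]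
    (N₀ N₁ : V → ℝ) (h₀ : IsNorm V N₀) (h₁ : IsNorm V N₁) (x : V) :
    Tendsto (fun t : ℝ => Kfunctional N₀ N₁ x t) atTop (𝓝 (N₀ x)) ∧
    Tendsto (fun t : ℝ => Kfunctional N₀ N₁ x t / t) (𝓝[>] (0 : ℝ)) (𝓝 (N₁ x)) := by
  obtain ⟨C₀, hC₀pos, hC₀⟩ := exists_bound h₀ h₁
  obtain ⟨C₁, hC₁pos, hC₁⟩ := exists_bound h₁ h₀
  constructor
  · -- eventually K(x,t) = N₀ x, for t ≥ C₀
    refine Tendsto.congr' ?_ tendsto_const_nhds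
    filter_upwards [eventually_ge_atTop C₀] with t ht
    have hlb : ∀ v ∈ {v : ℝ | ∃ x₀ x₁ : V, x₀ + x₁ = x ∧ v = N₀ x₀ + t * N₁ x₁},
        N₀ x ≤ v := by
      rintro v ⟨x₀, x₁, hsum, rfl⟩
      have h1 : N₀ x ≤ N₀ x₀ + N₀ x₁ := hsum ▸ h₀.add_le x₀ x₁
      have h2 : N₀ x₁ ≤ C₀ * N₁ x₁ := hC₀ x₁
      have h3 : C₀ * N₁ x₁ ≤ t * N₁ x₁ :=
        mul_le_mul_of_nonneg_right ht (nonneg h₁ x₁)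
      linarith
    have hmem : N₀ x ∈ {v : ℝ | ∃ x₀ x₁ : V, x₀ + x₁ = x ∧ v = N₀ x₀ + t * N₁ x₁} :=
      ⟨x, 0, by simp, by simp [map_zero h₁]⟩
    exact (le_antisymm (csInf_le ⟨N₀ x, hlb⟩ hmem) (le_csInf ⟨_, hmem⟩ hlb)).symm
  · -- eventually K(x,t) = t * N₁ x, for 0 < t < 1/C₁
    refine Tendsto.congr' ?_ tendsto_const_nhds
    have hmemF : Ioo (0:ℝ) (1 / C₁) ∈ 𝓝[>] (0:ℝ) :=
      Ioo_mem_nhdsGT_of_mem ⟨le_refl 0, by positivity⟩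
    filter_upwards [hmemF] with t ht
    obtain ⟨htpos, htlt⟩ := ht
    have htC : t * C₁ ≤ 1 := by
      rw [← le_div_iff₀ hC₁pos] at *
      exact le_of_lt htlt
    have hlb : ∀ v ∈ {v : ℝ | ∃ x₀ x₁ : V, x₀ + x₁ = x ∧ v = N₀ x₀ + t * N₁ x₁},
        t * N₁ x ≤ v := by
      rintro v ⟨x₀, x₁, hsum, rfl⟩
      have h1 : N₁ x ≤ N₁ x₀ + N₁ x₁ := hsum ▸ h₁.add_le x₀ x₁
      have h2 : N₁ x₀ ≤ C₁ * N₀ x₀ := hC₁ x₀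
      have h4 : 0 ≤ N₀ x₀ := nonneg h₀ x₀
      nlinarith [nonneg h₁ x₁]
    have hmem : t * N₁ x ∈ {v : ℝ | ∃ x₀ x₁ : V, x₀ + x₁ = x ∧ v = N₀ x₀ + t * N₁ x₁} :=
      ⟨0, x, by simp, by simp [map_zero h₀]⟩
    have hK : Kfunctional N₀ N₁ x t = t * N₁ x :=
      le_antisymm (csInf_le ⟨t * N₁ x, hlb⟩ hmem) (le_csInf ⟨_, hmem⟩ hlb)
    rw [hK, mul_div_cancel_left₀ _ (ne_of_gt htpos)]
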